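/- Let Q ∈ ℝ^{n×n}, let V ∈ ℝ^{n×N} be a collector matrix, and let U ∈ ℝ^{N×n} satisfy UV = I. If VUQV = QV, then for every natural number k, Q^k V = V (UQV)^k, and consequently exp(tQ)·V = V·exp(t·UQV) for every real t, where exp denotes the matrix exponential. -/

import Mathlib

open Matrix

/-- The all-ones real column vector. -/
def onesR (n : ℕ) : Matrix (Fin n) (Fin 1) ℝ := Matrix.of fun _ _ => 1

/-- A real matrix is a collector if every entry is 0 or 1 and every row
contains exactly one 1. -/
def IsCollectorR {n N : ℕ} (V : Matrix (Fin n) (Fin N) ℝ) : Prop :=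
  (∀ i j, V i j = 0 ∨ V i j = 1) ∧ ∀ i, ∃! j, V i j = 1

/-- if `VUQV = QV` then `Q^k V = V (UQV)^k` for all `k`, and
consequently `exp(tQ)·V = V·exp(t·UQV)` for every real `t`. -/
theorem mrc_pow_and_exp_commute_with_lumping {n N : ℕ}
    (Q : Matrix (Fin n) (Fin n) ℝ) (V : Matrix (Fin n) (Fin N) ℝ)
    (U : Matrix (Fin N) (Fin n) ℝ)
    (hV : IsCollectorR V) (hUV : U * V = 1)
    (h : V * U * Q * V = Q * V) :
    (∀ k : ℕ, Q ^ k * V = V * (U * Q * V) ^ k) ∧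
    ∀ t : ℝ, NormedSpace.exp (t • Q) * V = V * NormedSpace.exp (t • (U * Q * V)) := by
  have hpow : ∀ k : ℕ, Q ^ k * V = V * (U * Q * V) ^ k := by
    intro k
    induction k with
    | zero => simp
    | succ k ih =>
      calc Q ^ (k + 1) * V = Q ^ k * (Q * V) := by rw [pow_succ, Matrix.mul_assoc]
        _ = Q ^ k * (V * U * Q * V) := by rw [h]
        _ = (Q ^ k * V) * (U * Q * V) := by
              simp only [← Matrix.mul_assoc]
        _ = V * (U * Q * V) ^ k * (U * Q * V) := by rw [ih]
        _ = V * (U * Q * V) ^ (k + 1) := by rw [pow_succ, Matrix.mul_assoc]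
  refine ⟨hpow, fun t => ?_⟩
  letI : NormedAddCommGroup (Matrix (Fin n) (Fin n) ℝ) := Matrix.linftyOpNormedAddCommGroup
  letI : NormedRing (Matrix (Fin n) (Fin n) ℝ) := Matrix.linftyOpNormedRing
  letI : NormedAlgebra ℝ (Matrix (Fin n) (Fin n) ℝ) := Matrix.linftyOpNormedAlgebra
  letI : NormedAddCommGroup (Matrix (Fin N) (Fin N) ℝ) := Matrix.linftyOpNormedAddCommGroup
  letI : NormedRing (Matrix (Fin N) (Fin N) ℝ) := Matrix.linftyOpNormedRing
  letI : NormedAlgebra ℝ (Matrix (Fin N) (Fin N) ℝ) := Matrix.linftyOpNormedAlgebra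
  let L : Matrix (Fin n) (Fin n) ℝ →ₗ[ℝ] Matrix (Fin n) (Fin N) ℝ :=
    { toFun := fun A => A * V
      map_add' := fun A B => Matrix.add_mul A B V
      map_smul' := fun c A => Matrix.smul_mul c A V }
  let R : Matrix (Fin N) (Fin N) ℝ →ₗ[ℝ] Matrix (Fin n) (Fin N) ℝ :=
    { toFun := fun B => V * B
      map_add' := fun A B => Matrix.mul_add V A B
      map_smul' := fun c A => Matrix.mul_smul V c A }
  have hL : Continuous L := L.continuous_of_finiteDimensional
  have hR : Continuous R := R.continuous_of_finiteDimensional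
  have hs1 := NormedSpace.expSeries_summable' (𝕂 := ℝ) (t • Q)
  have hs2 := NormedSpace.expSeries_summable' (𝕂 := ℝ) (t • (U * Q * V))
  have key : ∀ k : ℕ, L (((k.factorial : ℝ)⁻¹) • (t • Q) ^ k)
      = R (((k.factorial : ℝ)⁻¹) • (t • (U * Q * V)) ^ k) := by
    intro k
    show ((k.factorial : ℝ)⁻¹ • (t • Q) ^ k) * V = V * ((k.factorial : ℝ)⁻¹ • (t • (U * Q * V)) ^ k)
    rw [Matrix.smul_mul, Matrix.mul_smul, smul_pow, smul_pow, Matrix.smul_mul, Matrix.mul_smul,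
      hpow k]
  calc NormedSpace.exp (t • Q) * V
      = L (∑' k : ℕ, ((k.factorial : ℝ)⁻¹) • (t • Q) ^ k) := by
        rw [NormedSpace.exp_eq_tsum (𝕂 := ℝ)]; rfl
    _ = ∑' k : ℕ, L (((k.factorial : ℝ)⁻¹) • (t • Q) ^ k) :=
        (hs1.hasSum.map L hL).tsum_eq.symm
    _ = ∑' k : ℕ, R (((k.factorial : ℝ)⁻¹) • (t • (U * Q * V)) ^ k) := tsum_congr key
    _ = R (∑' k : ℕ, ((k.factorial : ℝ)⁻¹) • (t • (U * Q * V)) ^ k) :=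
        (hs2.hasSum.map R hR).tsum_eq
    _ = V * NormedSpace.exp (t • (U * Q * V)) := by
        rw [NormedSpace.exp_eq_tsum (𝕂 := ℝ)]; rfl
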